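/- Let 0 → C'' → C' → C → K → 0 be an exact sequence of chain complexes of abelian groups (i.e., exact in each degree), and suppose H_i(K) = 0 for all i ≤ n+1. Then there is an exact sequence of homology groups H_n(C'') → H_n(C') → H_n(C) → H_{n−1}(C'') → H_{n−1}(C') → H_{n−1}(C) → ⋯ → H_0(C'') → H_0(C') → H_0(C) → 0 in degrees ≤ n. -/

import Mathlib

section

variable (C : ℕ → Type*) [∀ i, AddCommGroup (C i)] (d : ∀ i : ℕ, C (i + 1) →+ C i)

/-- Cycles of an `ℕ`-indexed chain complex (in degree `n + 1`). -/
def cycN (n : ℕ) : AddSubgroup (C (n + 1)) := (d n).ker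

/-- Boundaries of an `ℕ`-indexed chain complex (in degree `n + 1`). -/
def bdryN (n : ℕ) : AddSubgroup (C (n + 1)) := (d (n + 1)).range

/-- Homology of a chain complex of abelian groups concentrated in non-negative
degrees. -/
def HgbN : ℕ → Type _
  | 0 => C 0 ⧸ (d 0).range
  | n + 1 => cycN C d n ⧸ (bdryN C d n).addSubgroupOf (cycN C d n)

noncomputable instance (n : ℕ) : AddCommGroup (HgbN C d n) := by
  cases n with
  | zero => exact QuotientAddGroup.Quotient.addCommGroup _
  | succ n => exact QuotientAddGroup.Quotient.addCommGroup _

def IsCycN : ∀ n : ℕ, C n → Prop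
  | 0, _ => True
  | m + 1, x => d m x = 0

theorem isCycN_zero : ∀ n : ℕ, IsCycN C d n 0
  | 0 => trivial
  | _ + 1 => map_zero _

theorem isCycN_add : ∀ (n : ℕ) (x y : C n), IsCycN C d n x → IsCycN C d n y →
    IsCycN C d n (x + y)
  | 0, _, _, _, _ => trivial
  | m + 1, x, y, hx, hy => by
      show d m (x + y) = 0
      rw [map_add, show d m x = 0 from hx, show d m y = 0 from hy, add_zero]

theorem isCycN_sub : ∀ (n : ℕ) (x y : C n), IsCycN C d n x → IsCycN C d n y →
    IsCycN C d n (x - y)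
  | 0, _, _, _, _ => trivial
  | m + 1, x, y, hx, hy => by
      show d m (x - y) = 0
      rw [map_sub, show d m x = 0 from hx, show d m y = 0 from hy, sub_zero]

def mkHN : ∀ (n : ℕ) (x : C n), IsCycN C d n x → HgbN C d n
  | 0, x, _ => QuotientAddGroup.mk x
  | m + 1, x, hx => QuotientAddGroup.mk (⟨x, hx⟩ : cycN C d m)

theorem mkHN_congr : ∀ (n : ℕ) (x y : C n) (hx : IsCycN C d n x) (hy : IsCycN C d n y),
    x = y → mkHN C d n x hx = mkHN C d n y hy := by
  intro n x y hx hy hxy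
  subst hxy
  rfl

theorem mkHN_surjective : ∀ (n : ℕ) (c : HgbN C d n), ∃ x hx, mkHN C d n x hx = c
  | 0, c => by
      obtain ⟨x, rfl⟩ := QuotientAddGroup.mk_surjective c
      exact ⟨x, trivial, rfl⟩
  | m + 1, c => by
      obtain ⟨x, rfl⟩ := QuotientAddGroup.mk_surjective c
      exact ⟨x.1, x.2, rfl⟩

theorem mkHN_add : ∀ (n : ℕ) (x y : C n) (hx : IsCycN C d n x) (hy : IsCycN C d n y),
    mkHN C d n (x + y) (isCycN_add C d n x y hx hy) = mkHN C d n x hx + mkHN C d n y hy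
  | 0, _, _, _, _ => rfl
  | _ + 1, _, _, _, _ => rfl

theorem mkHN_eq_zero_iff : ∀ (n : ℕ) (x : C n) (hx : IsCycN C d n x),
    (mkHN C d n x hx = 0 ↔ ∃ y, d n y = x)
  | 0, x, _ => by
      show (QuotientAddGroup.mk x : C 0 ⧸ (d 0).range) = 0 ↔ _
      rw [QuotientAddGroup.eq_zero_iff]
      exact Iff.rfl
  | m + 1, x, hx => by
      show (QuotientAddGroup.mk (⟨x, hx⟩ : cycN C d m) :
        cycN C d m ⧸ (bdryN C d m).addSubgroupOf (cycN C d m)) = 0 ↔ _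
      rw [QuotientAddGroup.eq_zero_iff, AddSubgroup.mem_addSubgroupOf]
      exact Iff.rfl

theorem mkHN_eq_of (n : ℕ) (x y : C n) (hx : IsCycN C d n x) (hy : IsCycN C d n y)
    (hb : ∃ u, d n u = x - y) : mkHN C d n x hx = mkHN C d n y hy := by
  have h0 : mkHN C d n (x - y) (isCycN_sub C d n x y hx hy) = 0 :=
    (mkHN_eq_zero_iff C d n _ _).mpr hb
  have h1 := mkHN_add C d n (x - y) y (isCycN_sub C d n x y hx hy) hy
  rw [h0, zero_add] at h1
  rw [← h1]
  exact mkHN_congr C d n _ _ _ _ (by abel)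

end

theorem isCycN_map {C C' : ℕ → Type*} [∀ i, AddCommGroup (C i)]
    [∀ i, AddCommGroup (C' i)] (d : ∀ i : ℕ, C (i + 1) →+ C i)
    (d' : ∀ i : ℕ, C' (i + 1) →+ C' i) (f : ∀ i, C i →+ C' i)
    (hf : ∀ (i : ℕ) (x : C (i + 1)), f i (d i x) = d' i (f (i + 1) x)) :
    ∀ (n : ℕ) (x : C n), IsCycN C d n x → IsCycN C' d' n (f n x)
  | 0, _, _ => trivial
  | m + 1, x, hx => by
      show d' m (f (m + 1) x) = 0
      rw [← hf m x, show d m x = 0 from hx, map_zero]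

/-- The map induced on homology by a chain map. -/
noncomputable def indH {C C' : ℕ → Type*} [∀ i, AddCommGroup (C i)]
    [∀ i, AddCommGroup (C' i)] (d : ∀ i : ℕ, C (i + 1) →+ C i)
    (d' : ∀ i : ℕ, C' (i + 1) →+ C' i) (f : ∀ i, C i →+ C' i)
    (hf : ∀ (i : ℕ) (x : C (i + 1)), f i (d i x) = d' i (f (i + 1) x)) :
    ∀ n : ℕ, HgbN C d n →+ HgbN C' d' n
  | 0 => QuotientAddGroup.map _ _ (f 0) (by
      rintro x ⟨y, rfl⟩
      exact ⟨f 1 y, (hf 0 y).symm⟩)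
  | n + 1 => QuotientAddGroup.map _ _
      (((f (n + 1)).comp (cycN C d n).subtype).codRestrict (cycN C' d' n) (by
        intro x
        have hx : d n x.1 = 0 := x.2
        show d' n (f (n + 1) x.1) = 0
        rw [← hf n x.1, hx, map_zero]))
      (by
        intro x hx
        rw [AddSubgroup.mem_comap]
        rw [AddSubgroup.mem_addSubgroupOf] at hx ⊢
        obtain ⟨y, hy⟩ := hx
        exact ⟨f (n + 1 + 1) y, by
          show d' (n + 1) (f (n + 1 + 1) y) = f (n + 1) x.1
          rw [← hf (n + 1) y, hy]⟩)

theorem indH_mkHN {C C' : ℕ → Type*} [∀ i, AddCommGroup (C i)]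
    [∀ i, AddCommGroup (C' i)] (d : ∀ i : ℕ, C (i + 1) →+ C i)
    (d' : ∀ i : ℕ, C' (i + 1) →+ C' i) (f : ∀ i, C i →+ C' i)
    (hf : ∀ (i : ℕ) (x : C (i + 1)), f i (d i x) = d' i (f (i + 1) x)) :
    ∀ (n : ℕ) (x : C n) (hx : IsCycN C d n x) (hx' : IsCycN C' d' n (f n x)),
      indH d d' f hf n (mkHN C d n x hx) = mkHN C' d' n (f n x) hx'
  | 0, x, _, _ => rfl
  | m + 1, x, hx, hx' => rfl
theorem stmt15 {C'' C' C K : ℕ → Type*} [∀ i, AddCommGroup (C'' i)]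
    [∀ i, AddCommGroup (C' i)] [∀ i, AddCommGroup (C i)] [∀ i, AddCommGroup (K i)]
    (d'' : ∀ i : ℕ, C'' (i + 1) →+ C'' i) (d' : ∀ i : ℕ, C' (i + 1) →+ C' i)
    (dC : ∀ i : ℕ, C (i + 1) →+ C i) (dK : ∀ i : ℕ, K (i + 1) →+ K i)
    (hd'' : ∀ (i : ℕ) (x : C'' (i + 1 + 1)), d'' i (d'' (i + 1) x) = 0)
    (hd' : ∀ (i : ℕ) (x : C' (i + 1 + 1)), d' i (d' (i + 1) x) = 0)
    (hdC : ∀ (i : ℕ) (x : C (i + 1 + 1)), dC i (dC (i + 1) x) = 0)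
    (hdK : ∀ (i : ℕ) (x : K (i + 1 + 1)), dK i (dK (i + 1) x) = 0)
    (f : ∀ i, C'' i →+ C' i)
    (hf : ∀ (i : ℕ) (x : C'' (i + 1)), f i (d'' i x) = d' i (f (i + 1) x))
    (g : ∀ i, C' i →+ C i)
    (hg : ∀ (i : ℕ) (x : C' (i + 1)), g i (d' i x) = dC i (g (i + 1) x))
    (h : ∀ i, C i →+ K i)
    (hh : ∀ (i : ℕ) (x : C (i + 1)), h i (dC i x) = dK i (h (i + 1) x))
    (hfinj : ∀ i, Function.Injective (f i))
    (hfg : ∀ i, (f i).range = (g i).ker)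
    (hgh : ∀ i, (g i).range = (h i).ker)
    (hhsurj : ∀ i, Function.Surjective (h i))
    (n : ℕ) (hK : ∀ i ≤ n + 1, Subsingleton (HgbN K dK i)) :
    ∃ δ : ∀ i : ℕ, HgbN C dC (i + 1) →+ HgbN C'' d'' i,
      (∀ i ≤ n, (indH d'' d' f hf i).range = (indH d' dC g hg i).ker) ∧
      (∀ i : ℕ, i + 1 ≤ n → (indH d' dC g hg (i + 1)).range = (δ i).ker) ∧
      (∀ i : ℕ, i + 1 ≤ n → (δ i).range = (indH d'' d' f hf i).ker) ∧
      Function.Surjective (indH d' dC g hg 0) := by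
  classical
  have hfinj0 : ∀ i (y : C'' i), f i y = 0 → y = 0 := fun i y hy =>
    hfinj i (by rw [hy, map_zero])
  have hgf : ∀ i (v : C'' i), g i (f i v) = 0 := fun i v =>
    show f i v ∈ (g i).ker by rw [← hfg i]; exact ⟨v, rfl⟩
  have hhg : ∀ i (u : C' i), h i (g i u) = 0 := fun i u =>
    show g i u ∈ (h i).ker by rw [← hgh i]; exact ⟨u, rfl⟩
  have hkerg : ∀ i (u : C' i), g i u = 0 → ∃ v, f i v = u := fun i u hu =>
    show u ∈ (f i).range by rw [hfg i]; exact hu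
  have hkerh : ∀ i (x : C i), h i x = 0 → ∃ u, g i u = x := fun i x hx =>
    show x ∈ (g i).range by rw [hgh i]; exact hx
  have hKb : ∀ m, m ≤ n + 1 → ∀ (x : K m), IsCycN K dK m x → ∃ y, dK m y = x := by
    intro m hm x hx
    haveI := hK m hm
    exact (mkHN_eq_zero_iff K dK m x hx).mp (Subsingleton.elim _ _)
  have L : ∀ m, m ≤ n + 1 → ∀ x : C m, IsCycN K dK m (h m x) →
      ∃ (w : C (m + 1)) (u : C' m), g m u = x - dC m w := by
    intro m hm x hx
    obtain ⟨y, hy⟩ := hKb m hm (h m x) hx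
    obtain ⟨w, rfl⟩ := hhsurj (m + 1) y
    obtain ⟨u, hu⟩ := hkerh m (x - dC m w) (by rw [map_sub, hh m w, hy, sub_self])
    exact ⟨w, u, hu⟩
  have Rex : ∀ i, i + 1 ≤ n + 1 → ∀ x : C (i + 1), dC i x = 0 →
      ∃ (v : C'' i) (hv : IsCycN C'' d'' i v) (w : C (i + 1 + 1)) (u : C' (i + 1)),
        g (i + 1) u = x - dC (i + 1) w ∧ f i v = d' i u := by
    intro i hi x hx
    obtain ⟨w, u, hu⟩ := L (i + 1) hi x
      (by show dK i (h (i + 1) x) = 0; rw [← hh i x, hx, map_zero])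
    have hdu : g i (d' i u) = 0 := by
      rw [hg i u, hu, map_sub, hx, hdC i w, sub_zero]
    obtain ⟨v, hv⟩ := hkerg i (d' i u) hdu
    refine ⟨v, ?_, w, u, hu, hv⟩
    cases i with
    | zero => trivial
    | succ p =>
      show d'' p v = 0
      apply hfinj0
      rw [hf p v, hv]
      exact hd' p u
  have Runiq : ∀ i, i + 1 ≤ n → ∀ (x : C (i + 1)) (v v' : C'' i)
      (hv : IsCycN C'' d'' i v) (hv' : IsCycN C'' d'' i v'),
      (∃ (w : C (i + 1 + 1)) (u : C' (i + 1)),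
        g (i + 1) u = x - dC (i + 1) w ∧ f i v = d' i u) →
      (∃ (w : C (i + 1 + 1)) (u : C' (i + 1)),
        g (i + 1) u = x - dC (i + 1) w ∧ f i v' = d' i u) →
      mkHN C'' d'' i v hv = mkHN C'' d'' i v' hv' := by
    rintro i hi x v v' hv hv' ⟨w, u, hu, hfv⟩ ⟨w', u', hu', hfv'⟩
    have ht : g (i + 1) (u - u') = dC (i + 1) (w' - w) := by
      rw [map_sub, hu, hu', map_sub]; abel
    have hcyc : IsCycN K dK (i + 1 + 1) (h (i + 1 + 1) (w' - w)) := by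
      show dK (i + 1) (h (i + 1 + 1) (w' - w)) = 0
      rw [← hh (i + 1) (w' - w), ← ht, hhg]
    obtain ⟨s, p, hp⟩ := L (i + 1 + 1) (Nat.succ_le_succ hi) (w' - w) hcyc
    have h0 : g (i + 1) (u - u' - d' (i + 1) p) = 0 := by
      rw [map_sub, ht, hg (i + 1) p, hp,
        map_sub (dC (i + 1)) (w' - w) (dC (i + 1 + 1) s), hdC (i + 1) s, sub_zero, sub_self]
    obtain ⟨q, hq⟩ := hkerg (i + 1) _ h0
    apply mkHN_eq_of
    refine ⟨q, hfinj i ?_⟩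
    rw [hf i q, hq, map_sub, map_sub, hd' i p, sub_zero, ← hfv, ← hfv', ← map_sub]
  have hdelta : ∀ i, i + 1 ≤ n → ∃ δi : HgbN C dC (i + 1) →+ HgbN C'' d'' i,
      ∀ (x : C (i + 1)) (hx : IsCycN C dC (i + 1) x) (v : C'' i) (hv : IsCycN C'' d'' i v),
        (∃ (w : C (i + 1 + 1)) (u : C' (i + 1)),
          g (i + 1) u = x - dC (i + 1) w ∧ f i v = d' i u) →
        δi (mkHN C dC (i + 1) x hx) = mkHN C'' d'' i v hv := by
    intro i hi
    have hi' : i + 1 ≤ n + 1 := hi.trans (Nat.le_succ n)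
    choose vf hvf wf uf h1 h2 using Rex i hi'
    have hmem : ∀ a : cycN C dC i, dC i a.1 = 0 := fun a => a.2
    set φf : cycN C dC i → HgbN C'' d'' i :=
      fun a => mkHN C'' d'' i (vf a.1 (hmem a)) (hvf a.1 (hmem a)) with hφf
    have hφadd : ∀ a b : cycN C dC i, φf (a + b) = φf a + φf b := by
      intro a b
      rw [hφf]
      dsimp only
      rw [← mkHN_add C'' d'' i _ _ (hvf a.1 (hmem a)) (hvf b.1 (hmem b))]
      apply Runiq i hi (a.1 + b.1)
      · exact ⟨wf _ _, uf _ _, h1 _ _, h2 _ _⟩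
      · refine ⟨wf a.1 (hmem a) + wf b.1 (hmem b), uf a.1 (hmem a) + uf b.1 (hmem b), ?_, ?_⟩
        · rw [map_add, h1, h1, map_add]; abel
        · rw [map_add, h2, h2, map_add]
    have hker : ∀ a ∈ (bdryN C dC i).addSubgroupOf (cycN C dC i),
        (AddMonoidHom.mk' φf hφadd) a = 0 := by
      intro a ha
      rw [AddSubgroup.mem_addSubgroupOf] at ha
      obtain ⟨w, hw⟩ := ha
      show φf a = 0
      have hz : φf a = mkHN C'' d'' i 0 (isCycN_zero C'' d'' i) := by
        rw [hφf]
        apply Runiq i hi a.1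
        · exact ⟨wf _ _, uf _ _, h1 _ _, h2 _ _⟩
        · exact ⟨w, 0, by rw [map_zero, hw, sub_self], by rw [map_zero, map_zero]⟩
      rw [hz]
      exact (mkHN_eq_zero_iff C'' d'' i _ _).mpr ⟨0, map_zero _⟩
    refine ⟨QuotientAddGroup.lift _ (AddMonoidHom.mk' φf hφadd) hker, ?_⟩
    intro x hx v hv hrel
    exact Runiq i hi x (vf x hx) v (hvf x hx) hv
      ⟨wf x hx, uf x hx, h1 x hx, h2 x hx⟩ hrel
  choose δ0 hδ0 using hdelta
  refine ⟨fun i => if hi : i + 1 ≤ n then δ0 i hi else 0, ?_, ?_, ?_, ?_⟩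
  · -- exactness at H_i(C')
    intro i hi
    ext c
    simp only [AddMonoidHom.mem_range, AddMonoidHom.mem_ker]
    constructor
    · rintro ⟨c', rfl⟩
      obtain ⟨v, hv, rfl⟩ := mkHN_surjective C'' d'' i c'
      rw [indH_mkHN d'' d' f hf i v hv (isCycN_map d'' d' f hf i v hv),
          indH_mkHN d' dC g hg i (f i v) (isCycN_map d'' d' f hf i v hv)
            (isCycN_map d' dC g hg i (f i v) (isCycN_map d'' d' f hf i v hv))]
      exact (mkHN_eq_zero_iff C dC i _ _).mpr ⟨0, by rw [map_zero, hgf i v]⟩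
    · intro hc
      obtain ⟨x, hx, rfl⟩ := mkHN_surjective C' d' i c
      rw [indH_mkHN d' dC g hg i x hx (isCycN_map d' dC g hg i x hx)] at hc
      obtain ⟨w, hw⟩ := (mkHN_eq_zero_iff C dC i _ _).mp hc
      have hwcyc : IsCycN K dK (i + 1) (h (i + 1) w) := by
        show dK i (h (i + 1) w) = 0
        rw [← hh i w, hw, hhg i x]
      obtain ⟨s, u, hu⟩ := L (i + 1) (Nat.succ_le_succ hi) w hwcyc
      have h0 : g i (x - d' i u) = 0 := by
        rw [map_sub, hg i u, hu, map_sub, hdC i s, sub_zero, hw, sub_self]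
      obtain ⟨v, hfv⟩ := hkerg i _ h0
      have hvc : IsCycN C'' d'' i v := by
        cases i with
        | zero => trivial
        | succ p =>
          show d'' p v = 0
          apply hfinj0
          rw [hf p v, hfv, map_sub, hd' p u, sub_zero]
          exact hx
      refine ⟨mkHN C'' d'' i v hvc, ?_⟩
      rw [indH_mkHN d'' d' f hf i v hvc (isCycN_map d'' d' f hf i v hvc)]
      apply mkHN_eq_of
      exact ⟨-u, by rw [map_neg, hfv]; abel⟩
  · -- exactness at H_{i+1}(C)
    intro i hi
    simp only [dif_pos hi]
    ext c
    simp only [AddMonoidHom.mem_range, AddMonoidHom.mem_ker]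
    constructor
    · rintro ⟨c', rfl⟩
      obtain ⟨u, hu, rfl⟩ := mkHN_surjective C' d' (i + 1) c'
      have hu' : d' i u = 0 := hu
      rw [indH_mkHN d' dC g hg (i + 1) u hu (isCycN_map d' dC g hg (i + 1) u hu),
        hδ0 i hi (g (i + 1) u) (isCycN_map d' dC g hg (i + 1) u hu) 0 (isCycN_zero C'' d'' i)
          ⟨0, u, by rw [map_zero, sub_zero], by rw [map_zero, hu']⟩]
      exact (mkHN_eq_zero_iff C'' d'' i _ _).mpr ⟨0, map_zero _⟩
    · intro hc
      obtain ⟨x, hx, rfl⟩ := mkHN_surjective C dC (i + 1) c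
      obtain ⟨v, hv, w, u, h1, h2⟩ := Rex i (hi.trans (Nat.le_succ n)) x hx
      rw [hδ0 i hi x hx v hv ⟨w, u, h1, h2⟩] at hc
      obtain ⟨q, hq⟩ := (mkHN_eq_zero_iff C'' d'' i _ _).mp hc
      have hcyc' : IsCycN C' d' (i + 1) (u - f (i + 1) q) := by
        show d' i (u - f (i + 1) q) = 0
        rw [map_sub, ← hf i q, hq, h2, sub_self]
      refine ⟨mkHN C' d' (i + 1) _ hcyc', ?_⟩
      rw [indH_mkHN d' dC g hg (i + 1) _ hcyc' (isCycN_map d' dC g hg (i + 1) _ hcyc')]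
      apply mkHN_eq_of
      refine ⟨-w, ?_⟩
      rw [map_neg, map_sub, hgf (i + 1) q, sub_zero, h1]; abel
  · -- exactness at H_i(C'')
    intro i hi
    simp only [dif_pos hi]
    ext c
    simp only [AddMonoidHom.mem_range, AddMonoidHom.mem_ker]
    constructor
    · rintro ⟨c', rfl⟩
      obtain ⟨x, hx, rfl⟩ := mkHN_surjective C dC (i + 1) c'
      obtain ⟨v, hv, w, u, h1, h2⟩ := Rex i (hi.trans (Nat.le_succ n)) x hx
      rw [hδ0 i hi x hx v hv ⟨w, u, h1, h2⟩,
          indH_mkHN d'' d' f hf i v hv (isCycN_map d'' d' f hf i v hv)]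
      exact (mkHN_eq_zero_iff C' d' i _ _).mpr ⟨u, h2.symm⟩
    · intro hc
      obtain ⟨v, hv, rfl⟩ := mkHN_surjective C'' d'' i c
      rw [indH_mkHN d'' d' f hf i v hv (isCycN_map d'' d' f hf i v hv)] at hc
      obtain ⟨u, hu⟩ := (mkHN_eq_zero_iff C' d' i _ _).mp hc
      have hxcyc : IsCycN C dC (i + 1) (g (i + 1) u) := by
        show dC i (g (i + 1) u) = 0
        rw [← hg i u, hu, hgf i v]
      exact ⟨mkHN C dC (i + 1) (g (i + 1) u) hxcyc,
        hδ0 i hi _ hxcyc v hv ⟨0, u, by rw [map_zero, sub_zero], hu.symm⟩⟩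
  · -- surjectivity in degree 0
    intro c
    obtain ⟨x, hx, rfl⟩ := mkHN_surjective C dC 0 c
    obtain ⟨w, u, hu⟩ := L 0 (Nat.zero_le _) x trivial
    refine ⟨mkHN C' d' 0 u trivial, ?_⟩
    rw [indH_mkHN d' dC g hg 0 u trivial trivial]
    apply mkHN_eq_of
    exact ⟨-w, by rw [map_neg, hu]; abel⟩
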